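/- arXiv:2203.09971 — 2 statements merged into one kernel-verified Lean document; each statement's English description precedes it below -/
import Mathlib

section
/- For every m ≥ 3 and every utilitarian budget aggregation mechanism f over m projects with m+1 voters, there exists a preference profile V with ℓ1-loss ℓ(V) = 2 − 4/(m+1). Concretely, on the profile where voter i proposes the single-minded division e_i (1 on project i) for i = 1,…,m and voter m+1 proposes e_1, the loss equals 2 − 4/(m+1). -/
open Finset

/-- A division among `m` projects: coordinates in `[0,1]` summing to `1`. -/
def IsDivision {m : ℕ} (x : Fin m → ℝ) : Prop :=
  (∀ j, 0 ≤ x j ∧ x j ≤ 1) ∧ ∑ j, x j = 1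

/-- The ℓ1 distance between two vectors over `Fin m`. -/
noncomputable def l1 {m : ℕ} (x y : Fin m → ℝ) : ℝ := ∑ j, |x j - y j|

/-- The proportional division (coordinatewise mean) of a profile. -/
noncomputable def propDiv {n m : ℕ} (V : Fin n → Fin m → ℝ) : Fin m → ℝ :=
  fun j => (∑ i, V i j) / (n : ℝ)

/-- The `(k+1)`-th smallest element of a multiset of reals. -/
noncomputable def medianAt (s : Multiset ℝ) (k : ℕ) : ℝ :=
  (s.sort (· ≤ ·)).getD k 0

/-- Voter reports on project `j` together with the `n+1` phantom values `p 0, …, p n`. -/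
noncomputable def projValues {n m : ℕ} (V : Fin n → Fin m → ℝ)
    (p : ℕ → ℝ) (j : Fin m) : Multiset ℝ :=
  (Multiset.map (fun i => V i j) Finset.univ.val) +
    (Multiset.map p (Finset.range (n + 1)).val)

/-- The median (the `(n+1)`-th smallest of the `2n+1` values) of the `n` voter reports
on project `j` together with the `n+1` phantom values. -/
noncomputable def phantomMedian {n m : ℕ} (V : Fin n → Fin m → ℝ)
    (p : ℕ → ℝ) (j : Fin m) : ℝ :=
  medianAt (projValues V p j) n

/-- A phantom system for `n` voters: continuous, weakly increasing functions
`y k : [0,1] → [0,1]`, `k = 0, …, n`, with `y k 0 = 0`, `y k 1 = 1`,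
pointwise ordered in `k`. -/
structure PhantomSystem (n : ℕ) where
  y : ℕ → ℝ → ℝ
  contOn : ∀ k ≤ n, ContinuousOn (y k) (Set.Icc 0 1)
  monoOn : ∀ k ≤ n, MonotoneOn (y k) (Set.Icc 0 1)
  mem_Icc : ∀ k ≤ n, ∀ t ∈ Set.Icc (0:ℝ) 1, y k t ∈ Set.Icc (0:ℝ) 1
  map_zero : ∀ k ≤ n, y k 0 = 0
  map_one : ∀ k ≤ n, y k 1 = 1
  mono_idx : ∀ t ∈ Set.Icc (0:ℝ) 1, ∀ k k', k ≤ k' → k' ≤ n → y k t ≤ y k' t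

/-- `f` is the moving phantom mechanism associated with the phantom system `Y`:
on each profile of divisions, for some `t*` making the medians sum to `1`,
it outputs on each project the median of the voter reports and the phantom values. -/
def IsMovingPhantom {n m : ℕ} (f : (Fin n → Fin m → ℝ) → (Fin m → ℝ))
    (Y : PhantomSystem n) : Prop :=
  ∀ V : Fin n → Fin m → ℝ, (∀ i, IsDivision (V i)) →
    ∃ t ∈ Set.Icc (0:ℝ) 1,
      (∑ j, phantomMedian V (fun k => Y.y k t) j) = 1 ∧
      ∀ j, f V j = phantomMedian V (fun k => Y.y k t) j

/-- Truthfulness of a budget aggregation mechanism: no voter `i` with true peak `V i`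
can get an outcome closer (in ℓ1 distance) to her peak by reporting some division `v`
instead of `V i`. -/
def Truthful {n m : ℕ} (f : (Fin n → Fin m → ℝ) → (Fin m → ℝ)) : Prop :=
  ∀ V : Fin n → Fin m → ℝ, (∀ i, IsDivision (V i)) →
    ∀ i : Fin n, ∀ v : Fin m → ℝ, IsDivision v →
      l1 (f V) (V i) ≤ l1 (f (Function.update V i v)) (V i)

/-- The ℓ1-loss of mechanism `f` on profile `V`. -/
noncomputable def loss {n m : ℕ} (f : (Fin n → Fin m → ℝ) → (Fin m → ℝ))
    (V : Fin n → Fin m → ℝ) : ℝ :=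
  l1 (f V) (propDiv V)

/-- The phantom system of the Piecewise Uniform mechanism for `n` voters. -/
noncomputable def puPhantom (n : ℕ) (k : ℕ) (t : ℝ) : ℝ :=
  if t < 1 / 2 then
    (if (k : ℝ) / (n : ℝ) < 1 / 2 then 0 else 4 * t * (k : ℝ) / (n : ℝ) - 2 * t)
  else
    (if (k : ℝ) / (n : ℝ) < 1 / 2 then (k : ℝ) * (2 * t - 1) / (n : ℝ)
     else (k : ℝ) * (3 - 2 * t) / (n : ℝ) - 2 + 2 * t)

/-- `w` is an output of the Piecewise Uniform mechanism on profile `V`. -/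
def IsPUOutcome {n m : ℕ} (V : Fin n → Fin m → ℝ) (w : Fin m → ℝ) : Prop :=
  ∃ t ∈ Set.Icc (0:ℝ) 1,
    (∑ j, phantomMedian V (fun k => puPhantom n k t) j) = 1 ∧
    ∀ j, w j = phantomMedian V (fun k => puPhantom n k t) j

/-- `w` is an output of the Independent Markets mechanism (phantoms `min (k·t) 1`)
on profile `V`. -/
def IsIMOutcome {n m : ℕ} (V : Fin n → Fin m → ℝ) (w : Fin m → ℝ) : Prop :=
  ∃ t : ℝ, 0 ≤ t ∧
    (∑ j, phantomMedian V (fun k => min ((k : ℝ) * t) 1) j) = 1 ∧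
    ∀ j, w j = phantomMedian V (fun k => min ((k : ℝ) * t) 1) j

/-- A single-minded division: it assigns the whole budget to one project. -/
def SingleMindedDiv {m : ℕ} (v : Fin m → ℝ) : Prop := ∃ j, v j = 1

/-- A double-minded division relative to an outcome `w` (three projects): it agrees with
`w` on one project `j`, proposes `1 - w j` on another project, and `0` on the third. -/
def DoubleMindedDiv (w v : Fin 3 → ℝ) : Prop :=
  ∃ j j' : Fin 3, j ≠ j' ∧ v j = w j ∧ v j' = 1 - w j ∧
    ∀ k, k ≠ j → k ≠ j' → v k = 0

/-- A three-type profile for mechanism `f`: each voter is fully-satisfied,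
double-minded, or single-minded. -/
def ThreeTypeProfile {n : ℕ} (f : (Fin n → Fin 3 → ℝ) → (Fin 3 → ℝ))
    (V : Fin n → Fin 3 → ℝ) : Prop :=
  ∀ i, V i = f V ∨ DoubleMindedDiv (f V) (V i) ∨ SingleMindedDiv (V i)

/-- The single-minded division fully supporting project `j`. -/
noncomputable def singleDiv (j : Fin 3) : Fin 3 → ℝ :=
  fun j' => if j' = j then 1 else 0

/-- The double-minded division proposing `x k` on project `k`, `1 - x k` on
project `j` and `0` on the remaining project. -/
noncomputable def doubleDiv (x : Fin 3 → ℝ) (k j : Fin 3) : Fin 3 → ℝ :=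
  fun j' => if j' = k then x k else if j' = j then 1 - x k else 0

/-- A utilitarian mechanism: it always returns a division minimizing the total
ℓ1 distance (social cost) to the voters' proposals. -/
def Utilitarian {n m : ℕ} (f : (Fin n → Fin m → ℝ) → (Fin m → ℝ)) : Prop :=
  ∀ V : Fin n → Fin m → ℝ, (∀ i, IsDivision (V i)) →
    IsDivision (f V) ∧
    ∀ x : Fin m → ℝ, IsDivision x → (∑ i, l1 (V i) (f V)) ≤ ∑ i, l1 (V i) x


lemma l1_single {m : ℕ} (x : Fin m → ℝ) (hx : IsDivision x) (j : Fin m) :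
    ∑ k, |(if k = j then (1:ℝ) else 0) - x k| = 2 - 2 * x j := by
  rw [← Finset.add_sum_erase _ _ (Finset.mem_univ j)]
  have h1 : |(if j = j then (1:ℝ) else 0) - x j| = 1 - x j := by
    rw [if_pos rfl, abs_of_nonneg (by linarith [(hx.1 j).2])]
  have h2 : ∑ k ∈ Finset.univ.erase j, |(if k = j then (1:ℝ) else 0) - x k|
      = ∑ k ∈ Finset.univ.erase j, x k := by
    refine Finset.sum_congr rfl fun k hk => ?_
    rw [if_neg (Finset.ne_of_mem_erase hk), zero_sub, abs_neg,
      abs_of_nonneg (hx.1 k).1]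
  have h3 : ∑ k ∈ Finset.univ.erase j, x k = 1 - x j := by
    have := Finset.add_sum_erase _ x (Finset.mem_univ j)
    rw [hx.2] at this
    linarith
  rw [h1, h2, h3]; ring

/-- For every `m ≥ 3` and every utilitarian mechanism over `m` projects
with `m + 1` voters, on the profile where voter `i` proposes the basis division
`e (i % m)` (so project `0` is supported twice and every other project once), the
ℓ1-loss equals `2 - 4/(m+1)`. -/
theorem utilitarian_lower_bound (m : ℕ) (hm : 3 ≤ m)
    (f : (Fin (m + 1) → Fin m → ℝ) → (Fin m → ℝ)) (hf : Utilitarian f) :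
    l1 (f (fun (i : Fin (m + 1)) (j : Fin m) => if (i : ℕ) % m = (j : ℕ) then 1 else 0))
       (propDiv (fun (i : Fin (m + 1)) (j : Fin m) =>
          if (i : ℕ) % m = (j : ℕ) then 1 else 0))
      = 2 - 4 / ((m : ℝ) + 1) := by
  have hm0 : 0 < m := by omega
  set V : Fin (m + 1) → Fin m → ℝ :=
    fun i j => if (i : ℕ) % m = (j : ℕ) then 1 else 0 with hV
  set z : Fin m := ⟨0, hm0⟩ with hz
  set jf : Fin (m + 1) → Fin m := fun i => ⟨(i : ℕ) % m, Nat.mod_lt _ hm0⟩ with hjf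
  have hVeq : ∀ i k, V i k = if k = jf i then (1:ℝ) else 0 := by
    intro i k
    simp only [hV, hjf, Fin.ext_iff, eq_comm]
  -- sum over voters of G ∘ jf
  have key : ∀ G : Fin m → ℝ, ∑ i : Fin (m + 1), G (jf i) = G z + ∑ j, G j := by
    intro G
    have h1 : ∀ i : Fin m, jf i.castSucc = i := by
      intro i
      simp [hjf, Fin.ext_iff, Nat.mod_eq_of_lt i.isLt]
    have h2 : jf (Fin.last m) = z := by
      simp [hjf, hz, Fin.ext_iff, Nat.mod_self]
    rw [Fin.sum_univ_castSucc]
    simp only [h1, h2]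
    ring
  -- each voter's report is a division
  have hprof : ∀ i, IsDivision (V i) := by
    intro i
    constructor
    · intro j
      rw [hVeq]
      split <;> norm_num
    · have : ∑ j, V i j = ∑ j, if j = jf i then (1:ℝ) else 0 :=
        Finset.sum_congr rfl fun j _ => hVeq i j
      rw [this, Finset.sum_ite_eq' _ (jf i)]
      simp
  obtain ⟨hdiv, hmin⟩ := hf V hprof
  -- total cost formula
  have cost : ∀ x : Fin m → ℝ, IsDivision x →
      ∑ i, l1 (V i) x = 2 * (m + 1) - 2 * (x z + 1) := by
    intro x hx
    have : ∀ i : Fin (m + 1), l1 (V i) x = 2 - 2 * x (jf i) := by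
      intro i
      unfold l1
      rw [← l1_single x hx (jf i)]
      exact Finset.sum_congr rfl fun k _ => by rw [hVeq]
    rw [Finset.sum_congr rfl fun i _ => this i, Finset.sum_sub_distrib,
      Finset.sum_const, ← Finset.mul_sum, key x, hx.2]
    simp
    ring
  -- the all-on-project-z division
  set x0 : Fin m → ℝ := fun k => if k = z then 1 else 0 with hx0def
  have hx0 : IsDivision x0 := by
    constructor
    · intro j; simp only [hx0def]; split <;> norm_num
    · simp [hx0def, Finset.sum_ite_eq' _ z]
  have hle := hmin x0 hx0
  rw [cost _ hdiv, cost _ hx0] at hle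
  simp only [hx0def, if_pos rfl] at hle
  have hfz : f V z = 1 := le_antisymm (hdiv.1 z).2 (by linarith)
  have hfk : ∀ k, k ≠ z → f V k = 0 := by
    have hsum : ∑ k ∈ Finset.univ.erase z, f V k = 0 := by
      have := Finset.add_sum_erase _ (f V) (Finset.mem_univ z)
      rw [hdiv.2, hfz] at this
      linarith
    intro k hk
    have := (Finset.sum_eq_zero_iff_of_nonneg
      (fun k _ => (hdiv.1 k).1)).mp hsum k (Finset.mem_erase.mpr ⟨hk, Finset.mem_univ k⟩)
    exact this
  -- proportional division
  have hpd : ∀ j, propDiv V j = ((if j = z then 1 else 0) + 1) / ((m : ℝ) + 1) := by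
    intro j
    unfold propDiv
    have : ∑ i, V i j = (if j = z then (1:ℝ) else 0) + 1 := by
      have e : ∀ i, V i j = (fun k => if j = k then (1:ℝ) else 0) (jf i) := by
        intro i
        rw [hVeq]
      have hkey := key (fun k => if j = k then (1:ℝ) else 0)
      rw [Finset.sum_congr rfl fun i _ => e i, hkey]
      simp [Finset.sum_ite_eq _ z]
    rw [this]
    push_cast
    ring_nf
  -- final computation
  have hM : (0:ℝ) < (m : ℝ) + 1 := by positivity
  unfold l1
  rw [← Finset.add_sum_erase _ _ (Finset.mem_univ z)]
  have t1 : |f V z - propDiv V z| = 1 - 2 / ((m : ℝ) + 1) := by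
    rw [hfz, hpd, if_pos rfl]
    have h3 : (3:ℝ) ≤ (m:ℝ) := by exact_mod_cast hm
    have hnn : (0:ℝ) ≤ 1 - ((1:ℝ)+1)/((m:ℝ)+1) := by
      rw [sub_nonneg, div_le_one hM]; linarith
    rw [abs_of_nonneg hnn]
    norm_num
  have t2 : ∑ k ∈ Finset.univ.erase z, |f V k - propDiv V k|
      = ((m : ℝ) - 1) * (1 / ((m : ℝ) + 1)) := by
    have : ∀ k ∈ Finset.univ.erase z, |f V k - propDiv V k| = 1 / ((m : ℝ) + 1) := by
      intro k hk
      rw [hfk k (Finset.ne_of_mem_erase hk), hpd, if_neg (Finset.ne_of_mem_erase hk)]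
      rw [zero_sub, abs_neg, abs_of_nonneg (by positivity)]
      norm_num
    rw [Finset.sum_congr rfl this, Finset.sum_const, nsmul_eq_mul]
    congr 1
    rw [Finset.card_erase_of_mem (Finset.mem_univ z), Finset.card_univ, Fintype.card_fin]
    push_cast [Nat.cast_sub (by omega : 1 ≤ m)]
    ring
  rw [t1, t2]
  field_simp
  ring
end

section
/- Let m ≥ 3, n ≥ 1, and let V be an arbitrary preference profile of n voters over m projects. For each project j, let x_j be the median of the 2n+1 values v_{1,j},…,v_{n,j}, 0, 1/n, 2/n, …, 1 (the n voter reports on project j together with the n+1 uniformly spaced phantom values k/n, k = 0,…,n). Then Σ_{j=1}^m x_j ≥ 1. -/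
open Finset

private lemma uniformPhantom_key (n : ℕ) (hn : 1 ≤ n) {m : ℕ} (V : Fin n → Fin m → ℝ) (j : Fin m)
    (h0 : ∀ i, 0 ≤ V i j) :
    (n : ℝ) ≤ ((Finset.univ.filter
        (fun i => V i j ≤ phantomMedian V (fun k => (k:ℝ)/(n:ℝ)) j)).card : ℝ)
      + n * phantomMedian V (fun k => (k:ℝ)/(n:ℝ)) j := by
  classical
  set p : ℕ → ℝ := fun k => (k:ℝ)/(n:ℝ) with hp
  set s : Multiset ℝ := projValues V p j with hs
  set l : List ℝ := s.sort (· ≤ ·) with hl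
  have hnpos : (0:ℝ) < n := by exact_mod_cast hn
  have hlen : l.length = 2 * n + 1 := by
    rw [hl, Multiset.length_sort, hs, projValues, Multiset.card_add,
      Multiset.card_map, Multiset.card_map]
    simp; ring
  have hlt : n < l.length := by omega
  have hx : phantomMedian V p j = l[n] := by
    rw [phantomMedian, medianAt, List.getD_eq_getElem _ _ hlt]
  set x : ℝ := phantomMedian V p j with hxdef
  -- x is an element of s, hence x ≥ 0
  have hxmem : x ∈ s := by
    rw [hx]
    exact (Multiset.mem_sort _).1 (List.getElem_mem _)
  have hx0 : 0 ≤ x := by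
    rw [hs, projValues] at hxmem
    rcases Multiset.mem_add.1 hxmem with h | h
    · rcases Multiset.mem_map.1 h with ⟨i, _, he⟩; rw [← he]; exact h0 i
    · rcases Multiset.mem_map.1 h with ⟨k, _, he⟩
      rw [← he]; exact div_nonneg (Nat.cast_nonneg k) (le_of_lt hnpos)
  -- at least n+1 elements of l are ≤ x
  have hsorted : l.Pairwise (· ≤ ·) := Multiset.pairwise_sort _ _
  have hcount : n + 1 ≤ l.countP (fun a => decide (a ≤ x)) := by
    have htd := List.take_append_drop (n+1) l
    have hlt' : n + 1 ≤ l.length := by omega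
    have htlen : (l.take (n+1)).length = n + 1 := by
      rw [List.length_take]; omega
    have hall : ∀ a ∈ l.take (n+1), a ≤ x := by
      intro a ha
      obtain ⟨i, hi, rfl⟩ := List.mem_iff_getElem.1 ha
      rw [List.getElem_take]
      rw [hx]
      have hi' : i < l.length := by omega
      have hin : i ≤ n := by rw [htlen] at hi; omega
      exact hsorted.rel_get_of_le (a := ⟨i, hi'⟩) (b := ⟨n, hlt⟩) hin
    calc n + 1 = (l.take (n+1)).countP (fun a => decide (a ≤ x)) := by
          rw [List.countP_eq_length.2 (by intro a ha; simpa using hall a ha), htlen]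
      _ ≤ _ := by
          conv_rhs => rw [← htd]
          rw [List.countP_append]; omega
  have hcount' : n + 1 ≤ s.countP (fun a => a ≤ x) := by
    have : s.countP (fun a => a ≤ x) = l.countP (fun a => decide (a ≤ x)) := by
      rw [← Multiset.sort_eq s (· ≤ ·), ← hl, Multiset.coe_countP]
    rw [this]; exact hcount
  have hsplit : s.countP (fun a => a ≤ x)
      = (univ.filter (fun i : Fin n => V i j ≤ x)).card
        + ((range (n+1)).filter (fun k => p k ≤ x)).card := by
    rw [hs, projValues, Multiset.countP_add, Multiset.countP_map, Multiset.countP_map]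
    rfl
  have hpb : ((range (n+1)).filter (fun k => p k ≤ x)).card ≤ ⌊(n:ℝ) * x⌋₊ + 1 := by
    have hsub : (range (n+1)).filter (fun k => p k ≤ x) ⊆ range (⌊(n:ℝ)*x⌋₊ + 1) := by
      intro k hk
      rw [mem_filter] at hk
      rw [mem_range, Nat.lt_succ_iff]
      apply Nat.le_floor
      have h2 := hk.2
      rw [hp, div_le_iff₀ hnpos] at h2
      linarith
    calc _ ≤ (range (⌊(n:ℝ)*x⌋₊ + 1)).card := Finset.card_le_card hsub
      _ = _ := by rw [card_range]
  rw [hsplit] at hcount'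
  have hnat : n ≤ (univ.filter (fun i : Fin n => V i j ≤ x)).card + ⌊(n:ℝ)*x⌋₊ := by omega
  have hfloor : (⌊(n:ℝ)*x⌋₊ : ℝ) ≤ n * x := Nat.floor_le (by positivity)
  calc (n:ℝ) ≤ ((univ.filter (fun i : Fin n => V i j ≤ x)).card : ℝ) + (⌊(n:ℝ)*x⌋₊:ℝ) := by
        exact_mod_cast hnat
    _ ≤ _ := by linarith

/-- For `m ≥ 3` projects, applying the Uniform Phantom computation
(phantoms `k/n`, `k = 0, …, n`) coordinatewise to any preference profile yields
per-project medians summing to at least `1`. -/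
theorem uniform_phantom_sum_ge_one (m n : ℕ) (hm : 3 ≤ m) (hn : 1 ≤ n)
    (V : Fin n → Fin m → ℝ) (hV : ∀ i, IsDivision (V i)) :
    1 ≤ ∑ j, phantomMedian V (fun k => (k : ℝ) / (n : ℝ)) j := by
  have hV' : ∀ i, (∀ j, 0 ≤ V i j ∧ V i j ≤ 1) ∧ ∑ j, V i j = 1 := hV
  classical
  set x : Fin m → ℝ := fun j => phantomMedian V (fun k => (k:ℝ)/(n:ℝ)) j with hxd
  show (1:ℝ) ≤ ∑ j, x j
  by_cases hcase : ∃ i, ∀ j, V i j ≤ x j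
  · obtain ⟨i, hi⟩ := hcase
    calc (1:ℝ) = ∑ j, V i j := ((hV' i).2).symm
      _ ≤ ∑ j, x j := Finset.sum_le_sum (fun j _ => hi j)
  · push_neg at hcase
    set A : Fin m → Finset (Fin n) := fun j => univ.filter (fun i => ¬ V i j ≤ x j) with hA
    have hcov : (univ : Finset (Fin n)) ⊆ univ.biUnion A := by
      intro i _
      obtain ⟨j, hj⟩ := hcase i
      exact Finset.mem_biUnion.2 ⟨j, mem_univ j, by simp [hA, not_le]; exact hj⟩
    have hcard : n ≤ ∑ j, (A j).card := by
      calc n = (univ : Finset (Fin n)).card := (Finset.card_fin n).symm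
        _ ≤ (univ.biUnion A).card := Finset.card_le_card hcov
        _ ≤ ∑ j, (A j).card := Finset.card_biUnion_le
    have hjkey : ∀ j, ((A j).card : ℝ) ≤ n * x j := by
      intro j
      have h1 := uniformPhantom_key n hn V j (fun i => ((hV' i).1 j).1)
      have h2 : (univ.filter (fun i => V i j ≤ x j)).card + (A j).card = n := by
        rw [hA]
        simpa using Finset.card_filter_add_card_filter_not
          (s := univ) (p := fun i : Fin n => V i j ≤ x j)
      have h2' : ((univ.filter (fun i => V i j ≤ x j)).card : ℝ) + ((A j).card : ℝ) = n := by
        exact_mod_cast h2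
      linarith
    have hnpos : (0:ℝ) < n := by exact_mod_cast hn
    have hsum : (n:ℝ) ≤ ∑ j, (n:ℝ) * x j := by
      calc (n:ℝ) ≤ ((∑ j, (A j).card : ℕ) : ℝ) := by exact_mod_cast hcard
        _ = ∑ j, ((A j).card:ℝ) := by push_cast; rfl
        _ ≤ _ := Finset.sum_le_sum fun j _ => hjkey j
    rw [← Finset.mul_sum] at hsum
    nlinarith [hsum]
end
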